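/- Let α be a unit speed surface curve with τ_g nowhere zero. Define G(s) = exp(∫(k_g k_n / τ_g)ds), y₁(s) = G(s)[c₉ − ∫G(s)^{-1}ds], y₃(s) = (k_g/τ_g)y₁(s), y₂ = 0. Then y₁' − k_g y₂ − k_n y₃ + 1 = 0 and y₂' + k_g y₁ − τ_g y₃ = 0, so γ(s) = α(s) + y₁(s)T(s) + y₃(s)U(s) satisfies γ'(s) parallel to U(s). -/

import Mathlib

noncomputable section

/-- ICC-associated helix of type 2, case `τ_g ≠ 0`. -/
theorem stmt_15
    (α T V U γ : ℝ → EuclideanSpace ℝ (Fin 3)) (kg kn tg y₁ y₂ y₃ G H : ℝ → ℝ) (c₉ : ℝ)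
    (hα : Differentiable ℝ α) (hT : Differentiable ℝ T)
    (hV : Differentiable ℝ V) (hU : Differentiable ℝ U)
    (hkgd : Differentiable ℝ kg) (hknd : Differentiable ℝ kn) (htgd : Differentiable ℝ tg)
    (hαT : ∀ s, deriv α s = T s)
    (hdT : ∀ s, deriv T s = kg s • V s + kn s • U s)
    (hdV : ∀ s, deriv V s = (-kg s) • T s + tg s • U s)
    (hdU : ∀ s, deriv U s = (-kn s) • T s + (-tg s) • V s)
    (htg : ∀ s, tg s ≠ 0)
    -- G is an antiderivative of k_g k_n / τ_g, and H an antiderivative of exp(G)⁻¹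
    (hG : ∀ s, HasDerivAt G (kg s * kn s / tg s) s)
    (hH : ∀ s, HasDerivAt H ((Real.exp (G s))⁻¹) s)
    (hy₁ : ∀ s, y₁ s = Real.exp (G s) * (c₉ - H s))
    (hy₃ : ∀ s, y₃ s = (kg s / tg s) * y₁ s)
    (hy₂ : ∀ s, y₂ s = 0)
    (hγ : ∀ s, γ s = α s + y₁ s • T s + y₃ s • U s) :
    (∀ s, deriv y₁ s - kg s * y₂ s - kn s * y₃ s + 1 = 0) ∧
    (∀ s, deriv y₂ s + kg s * y₁ s - tg s * y₃ s = 0) ∧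
    (∃ r : ℝ → ℝ, ∀ s, deriv γ s = r s • U s) := by
  have hy1fun : y₁ = fun s => Real.exp (G s) * (c₉ - H s) := funext hy₁
  have hy2fun : y₂ = fun _ => 0 := funext hy₂
  have hy3fun : y₃ = fun s => (kg s / tg s) * y₁ s := funext hy₃
  have hy1d : ∀ s, HasDerivAt y₁ (kg s * kn s / tg s * y₁ s - 1) s := by
    intro s
    have h1 : HasDerivAt (fun s => Real.exp (G s) * (c₉ - H s))
        (Real.exp (G s) * (kg s * kn s / tg s) * (c₉ - H s)
          + Real.exp (G s) * (0 - (Real.exp (G s))⁻¹)) s :=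
      ((hG s).exp.mul ((hasDerivAt_const s c₉).sub (hH s)))
    rw [hy1fun]
    convert h1 using 1
    show kg s * kn s / tg s * (Real.exp (G s) * (c₉ - H s)) - 1 = _
    field_simp
    ring
  have hy1diff : Differentiable ℝ y₁ := fun s => (hy1d s).differentiableAt
  have hy3diff : Differentiable ℝ y₃ := by
    rw [hy3fun]
    exact (hkgd.div htgd htg).mul hy1diff
  have hy3d : ∀ s, HasDerivAt y₃ (deriv y₃ s) s := fun s => (hy3diff s).hasDerivAt
  refine ⟨?_, ?_, ?_⟩
  · intro s
    rw [(hy1d s).deriv, hy₂ s, hy₃ s]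
    field_simp
    ring
  · intro s
    have h3 : tg s * (kg s / tg s * y₁ s) = kg s * y₁ s := by
      field_simp
      rw [mul_assoc]; exact mul_div_cancel_left₀ _ (htg s)
    rw [hy2fun, deriv_const, hy₃ s, h3]
    ring
  · refine ⟨fun s => kn s * y₁ s + deriv y₃ s, fun s => ?_⟩
    have hαd : HasDerivAt α (T s) s := by
      have := (hα s).hasDerivAt; rwa [hαT s] at this
    have hTd : HasDerivAt T (kg s • V s + kn s • U s) s := by
      have := (hT s).hasDerivAt; rwa [hdT s] at this
    have hUd : HasDerivAt U ((-kn s) • T s + (-tg s) • V s) s := by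
      have := (hU s).hasDerivAt; rwa [hdU s] at this
    have hγd : HasDerivAt γ
        (T s + ((kg s * kn s / tg s * y₁ s - 1) • T s + y₁ s • (kg s • V s + kn s • U s))
          + (deriv y₃ s • U s + y₃ s • ((-kn s) • T s + (-tg s) • V s))) s := by
      have hfun : γ = fun s => α s + y₁ s • T s + y₃ s • U s := funext hγ
      rw [hfun]
      have := (hαd.add ((hy1d s).smul hTd)).add ((hy3d s).smul hUd)
      refine this.congr_deriv ?_
      module
    rw [hγd.deriv, hy₃ s]
    match_scalars
    · field_simp
      ring
    · field_simp
      rw [div_self (htg s)]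
      ring
    · ring
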